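/- arXiv:2102.04384 — 3 statements merged into one kernel-verified Lean document; each statement's English description precedes it below -/
import Mathlib

section
/- Assume each agent is eligible for at most one preferential category and all categories' priorities are consistent with the baseline ordering. Then the outcome of the minimum-guarantees rule is the UNIQUE matching that complies with the eligibility requirements, is a maximum beneficiary assignment, respects priorities, is non-wasteful, and is order preserving for q_{c_u^1} = 0 and q_{c_u^2} = q_{c_u}. -/
open scoped Classical

/-- An instance of the rationing problem: a quota for every category and, for every
category `c`, a priority ranking `≿_c`: a total preorder on `N ∪ {∅}`, where we model
`N ∪ {∅}` as `Option N` with `none` playing the role of `∅`. -/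
structure Inst (N C : Type*) where
  quota : C → ℕ
  prio : C → Option N → Option N → Prop
  total : ∀ c x y, prio c x y ∨ prio c y x
  trans : ∀ c x y z, prio c x y → prio c y z → prio c x z

namespace Inst

variable {N C : Type*}

/-- The strict part `≻_c` of the priority ranking `≿_c`. -/
def Strict (I : Inst N C) (c : C) (x y : Option N) : Prop :=
  I.prio c x y ∧ ¬ I.prio c y x

/-- Agent `i` is eligible for category `c` if `i ≻_c ∅`. -/
def Eligible (I : Inst N C) (i : N) (c : C) : Prop :=
  I.Strict c (some i) none

end Inst

variable {N C : Type*} [Fintype N] [DecidableEq N] [DecidableEq C]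

/-- The number of matched agents of (the function) `μ`. -/
def msize (μ : N → Option C) : ℕ :=
  (Finset.univ.filter fun i => μ i ≠ none).card

/-- `μ` satisfies the capacity constraints: every category `c` is matched
to at most `quota c` agents. -/
def Inst.IsMatching (I : Inst N C) (μ : N → Option C) : Prop :=
  ∀ c, (Finset.univ.filter fun i => μ i = some c).card ≤ I.quota c

/-- A baseline ordering `≻_π`, given as a duplicate-free list of all agents,
listed from highest priority to lowest priority; so `i ≻_π j` iff
`order.idxOf i < order.idxOf j`. -/
def IsBaseline (order : List N) : Prop :=
  order.Nodup ∧ ∀ i : N, i ∈ order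

/-- `μ` complies with the eligibility requirements. -/
def Complies (I : Inst N C) (μ : N → Option C) : Prop :=
  ∀ (i : N) (c : C), μ i = some c → I.Eligible i c

/-- `μ` respects priorities: no unmatched agent has strictly higher priority for some
category than an agent matched to it. -/
def RespectsPriorities (I : Inst N C) (μ : N → Option C) : Prop :=
  ¬ ∃ (i j : N) (c : C), μ i = some c ∧ μ j = none ∧ I.Strict c (some j) (some i)

/-- The number of agents matched to category `c` by `μ`. -/
def catCount (μ : N → Option C) (c : C) : ℕ :=
  (Finset.univ.filter fun i => μ i = some c).card

/-- `μ` is non-wasteful: an eligible agent is only left unmatched if all units of the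
category are used. -/
def NonWasteful (I : Inst N C) (μ : N → Option C) : Prop :=
  ∀ (i : N) (c : C), I.Eligible i c → μ i = none → catCount μ c = I.quota c

/-- The number of agents matched to a preferential category (a category other than the
unreserved category `cu`). -/
def beneCount (cu : C) (μ : N → Option C) : ℕ :=
  (Finset.univ.filter fun i => μ i ≠ none ∧ μ i ≠ some cu).card

/-- `μ` is a maximum beneficiary assignment: it maximizes the number of agents matched to
preferential categories among all matchings complying with the eligibility requirements. -/
def MaxBene (I : Inst N C) (cu : C) (μ : N → Option C) : Prop :=
  ∀ ν : N → Option C, I.IsMatching ν → Complies I ν → beneCount cu ν ≤ beneCount cu μ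

/-- The priorities are consistent with the baseline ordering: for each category the
eligible agents are ranked according to `≻_π`. -/
def Consistent (I : Inst N C) (order : List N) : Prop :=
  ∀ (c : C) (i j : N), I.Eligible i c → I.Eligible j c →
    (I.Strict c (some i) (some j) ↔ order.idxOf i < order.idxOf j)

/-- Each agent is eligible for at most one preferential category. -/
def OneCategory (I : Inst N C) (cu : C) : Prop :=
  ∀ (i : N) (c c' : C), c ≠ cu → c' ≠ cu → I.Eligible i c → I.Eligible i c' → c = c'

/-- One step of the minimum-guarantees rule: the considered agent is matched to a
preferential category she is eligible for if a unit of it remains, and otherwise to the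
unreserved category if an unreserved unit remains. -/
noncomputable def mgStep (I : Inst N C) (cu : C) (μ : N → Option C) (i : N) : N → Option C :=
  if h : ∃ c, c ≠ cu ∧ I.Eligible i c ∧ catCount μ c < I.quota c then
    Function.update μ i (some h.choose)
  else if catCount μ cu < I.quota cu then Function.update μ i (some cu)
  else μ

/-- The outcome of the minimum-guarantees rule: the agents are considered in order of the
baseline ordering from highest to lowest priority. -/
noncomputable def mgOutcome (I : Inst N C) (cu : C) (order : List N) : N → Option C :=
  order.foldl (mgStep I cu) fun _ => none

/-- Order preservation for `q_{c_u^1} = 0` and `q_{c_u^2} = q_{c_u}` (the unreserved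
category `cu` plays the role of `c_u^2`, and no agent is matched to `c_u^1`, so clause (i)
is vacuous): if `μ(j) ∈ C_p`, `i ≻_{μ(j)} j`, and `i` is eligible for `μ(j)`, then
`μ(i) ≠ c_u^2 = cu`. -/
def OrderPreservingMG (I : Inst N C) (cu : C) (μ : N → Option C) : Prop :=
  ∀ (i j : N) (ci cj : C), μ i = some ci → μ j = some cj → cj ≠ cu →
    I.Strict cj (some i) (some j) → I.Eligible i cj → ci ≠ cu

/-- One step of the first phase of the over-and-above rule: the considered agent `i` is
matched to the unreserved category only if an unreserved unit remains and, for any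
preferential category `c` that `i` is eligible for, at least `q_c` agents of `N_c` other
than `i` are still unmatched. -/
noncomputable def oaStep (I : Inst N C) (cu : C) (σ : N → Option C) (i : N) : N → Option C :=
  if catCount σ cu < I.quota cu ∧
      ∀ c : C, c ≠ cu → I.Eligible i c →
        I.quota c ≤ (Finset.univ.filter fun j => j ≠ i ∧ I.Eligible j c ∧ σ j = none).card then
    Function.update σ i (some cu)
  else σ

/-- The first phase of the over-and-above rule (allocation of the unreserved units),
considering the agents in order of the baseline ordering from highest to lowest priority. -/
noncomputable def oaPhase1 (I : Inst N C) (cu : C) (order : List N) : N → Option C :=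
  order.foldl (oaStep I cu) fun _ => none

/-- The outcome of the over-and-above rule: after the first phase, each preferential
category `c` is filled with the `min {q_c, |N_c|}` highest (baseline) priority agents of
`N_c` who are still unmatched. -/
noncomputable def oaOutcome (I : Inst N C) (cu : C) (order : List N) : N → Option C :=
  fun i =>
    if oaPhase1 I cu order i = some cu then some cu
    else if h : ∃ c, c ≠ cu ∧ I.Eligible i c ∧
        (Finset.univ.filter fun j => I.Eligible j c ∧ oaPhase1 I cu order j = none ∧
          order.idxOf j < order.idxOf i).card < I.quota c then
      some h.choose
    else none

/-- Order preservation for `q_{c_u^1} = q_{c_u}` and `q_{c_u^2} = 0` (the unreserved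
category `cu` plays the role of `c_u^1`, and no agent is matched to `c_u^2`, so clause (ii)
is vacuous): if `μ(i) ∈ C_p`, `i ≻_{μ(j)} j`, and `j` is eligible for `μ(i)`, then
`μ(j) ≠ c_u^1 = cu`. -/
def OrderPreservingOA (I : Inst N C) (cu : C) (μ : N → Option C) : Prop :=
  ∀ (i j : N) (ci cj : C), μ i = some ci → μ j = some cj → ci ≠ cu →
    I.Strict cj (some i) (some j) → I.Eligible j ci → cj ≠ cu

section Aux

open Finset

lemma elig_of_strict (I : Inst N C) (c : C) {i j : N}
    (h : I.Strict c (some j) (some i)) (hi : I.Eligible i c) : I.Eligible j c :=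
  ⟨I.trans c _ _ _ h.1 hi.1, fun hc => hi.2 (I.trans c _ _ _ hc h.1)⟩

lemma catCount_update (μ : N → Option C) (i : N) (hi : μ i = none) (c c' : C) :
    catCount (Function.update μ i (some c)) c' =
      catCount μ c' + if c' = c then 1 else 0 := by
  unfold catCount
  by_cases h : c' = c
  · subst h
    rw [if_pos rfl]
    have he : (Finset.univ.filter fun j => Function.update μ i (some c') j = some c')
        = insert i (Finset.univ.filter fun j => μ j = some c') := by
      ext j
      by_cases hj : j = i
      · subst hj; simp [hi]
      · simp [Function.update_of_ne hj, hj]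
    rw [he, Finset.card_insert_of_notMem (by simp [hi])]
  · rw [if_neg h]
    have he : (Finset.univ.filter fun j => Function.update μ i (some c) j = some c')
        = Finset.univ.filter fun j => μ j = some c' := by
      ext j
      by_cases hj : j = i
      · subst hj
        simp [hi]
        exact fun hh => h hh.symm
      · simp [Function.update_of_ne hj]
    rw [he, Nat.add_zero]

lemma catCount_update_none_le (μ : N → Option C) (i : N) (c' : C) :
    catCount (Function.update μ i none) c' ≤ catCount μ c' := by
  apply Finset.card_le_card
  intro j hj
  simp only [Finset.mem_filter, Finset.mem_univ, true_and] at hj ⊢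
  by_cases hji : j = i
  · subst hji; simp at hj
  · rwa [Function.update_of_ne hji] at hj

lemma beneCount_eq_sum (cu : C) (μ : N → Option C) (t : Finset C)
    (h1 : ∀ c ∈ t, c ≠ cu)
    (h2 : ∀ i : N, μ i ≠ none → μ i ≠ some cu → (μ i).getD cu ∈ t) :
    beneCount cu μ = ∑ c ∈ t, catCount μ c := by
  unfold beneCount
  rw [Finset.card_eq_sum_card_fiberwise (f := fun i => (μ i).getD cu) (t := t)
    (fun i hi => by
      simp only [Finset.mem_coe, Finset.mem_filter, Finset.mem_univ, true_and] at hi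
      exact h2 i hi.1 hi.2)]
  refine Finset.sum_congr rfl fun c hc => ?_
  unfold catCount
  congr 1
  ext j
  simp only [Finset.mem_filter, Finset.mem_univ, true_and]
  constructor
  · rintro ⟨⟨hn, hncu⟩, hg⟩
    cases hμ : μ j with
    | none => exact absurd hμ hn
    | some c' =>
        rw [hμ] at hg; simp at hg; rw [hg]
  · intro hj
    rw [hj]
    exact ⟨⟨by simp, by simpa using fun e => h1 c hc e⟩, rfl⟩

lemma upclosed_canon (A S : Finset N) (f : N → ℕ) (hf : ∀ a b : N, f a = f b → a = b)
    (hS : S ⊆ A) (hScl : ∀ j ∈ S, ∀ i ∈ A, f i < f j → i ∈ S) :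
    S = A.filter fun a => (A.filter fun b => f b < f a).card < S.card := by
  ext a
  simp only [Finset.mem_filter]
  constructor
  · intro ha
    refine ⟨hS ha, ?_⟩
    have hsub : (A.filter fun b => f b < f a) ⊆ S.erase a := by
      intro b hb
      simp only [Finset.mem_filter] at hb
      refine Finset.mem_erase.2 ⟨fun hba => ?_, hScl a ha b hb.1 hb.2⟩
      exact absurd (hba ▸ hb.2) (lt_irrefl _)
    have := Finset.card_le_card hsub
    have hpos : 0 < S.card := Finset.card_pos.2 ⟨a, ha⟩
    rw [Finset.card_erase_of_mem ha] at this
    omega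
  · rintro ⟨haA, hlt⟩
    by_contra haS
    have hsub : S ⊆ A.filter fun b => f b < f a := by
      intro s hs
      refine Finset.mem_filter.2 ⟨hS hs, ?_⟩
      rcases lt_trichotomy (f s) (f a) with h | h | h
      · exact h
      · exact absurd (hf s a h ▸ hs) haS
      · exact absurd (hScl s hs a haA h) haS
    have := Finset.card_le_card hsub
    omega

lemma eq_of_upclosed (A S T : Finset N) (f : N → ℕ) (hf : ∀ a b : N, f a = f b → a = b)
    (hS : S ⊆ A) (hT : T ⊆ A)
    (hScl : ∀ j ∈ S, ∀ i ∈ A, f i < f j → i ∈ S)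
    (hTcl : ∀ j ∈ T, ∀ i ∈ A, f i < f j → i ∈ T)
    (hcard : S.card = T.card) : S = T := by
  rw [upclosed_canon A S f hf hS hScl, upclosed_canon A T f hf hT hTcl, hcard]

end Aux
section Aux2

open Finset

lemma catCount_pref_min (I : Inst N C) (cu : C) (hone : OneCategory I cu)
    (μ : N → Option C) (hm : I.IsMatching μ) (hc : Complies I μ)
    (hmax : MaxBene I cu μ) (hnw : NonWasteful I μ) (c : C) (hcu : c ≠ cu) :
    catCount μ c = min (I.quota c) (Finset.univ.filter fun j => I.Eligible j c).card := by
  have hsub : (Finset.univ.filter fun i => μ i = some c) ⊆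
      (Finset.univ.filter fun j => I.Eligible j c) := by
    intro k hk
    simp only [Finset.mem_filter, Finset.mem_univ, true_and] at hk ⊢
    exact hc k c hk
  have h2 : catCount μ c ≤ (Finset.univ.filter fun j => I.Eligible j c).card :=
    Finset.card_le_card hsub
  have h1 : catCount μ c ≤ I.quota c := hm c
  rcases lt_or_ge (catCount μ c) (I.quota c) with hlt | hge
  · have hEsub : (Finset.univ.filter fun j => I.Eligible j c) ⊆
        (Finset.univ.filter fun i => μ i = some c) := by
      intro k hk
      simp only [Finset.mem_filter, Finset.mem_univ, true_and] at hk ⊢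
      cases hμk : μ k with
      | none => exact absurd (hnw k c hk hμk) (Nat.ne_of_lt hlt)
      | some c'' =>
        by_cases hc'' : c'' = cu
        · exfalso
          rw [hc''] at hμk
          set μ0 := Function.update μ k none with hμ0
          set ν := Function.update μ0 k (some c) with hνdef
          have hμ0k : μ0 k = none := Function.update_self _ _ _
          have hνc' := catCount_update μ0 k hμ0k c
          have hμ0c : catCount μ0 c = catCount μ c := by
            unfold catCount
            congr 1
            ext x
            by_cases hx : x = k
            · subst hx
              simp only [Finset.mem_filter, Finset.mem_univ, true_and]
              rw [hμ0k, hμk]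
              constructor
              · intro h; exact absurd h (by simp)
              · intro h; exact absurd (Option.some_inj.1 h).symm hcu
            · simp [hμ0, Function.update_of_ne hx]
          have hνm : I.IsMatching ν := by
            intro c''
            show catCount ν c'' ≤ I.quota c''
            rw [hνc' c'']
            by_cases hcc : c'' = c
            · subst hcc; rw [if_pos rfl, hμ0c]; omega
            · rw [if_neg hcc]
              have hle := catCount_update_none_le μ k c''
              rw [← hμ0] at hle
              have := hm c''
              have hbr : catCount μ c'' =
                  (Finset.univ.filter fun i => μ i = some c'').card := rfl
              omega
          have hνcomp : Complies I ν := by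
            intro x c'' hx
            by_cases hxk : x = k
            · subst hxk
              rw [hνdef, Function.update_self] at hx
              rw [← Option.some_inj.1 hx]
              exact hk
            · rw [hνdef, Function.update_of_ne hxk, hμ0, Function.update_of_ne hxk] at hx
              exact hc x c'' hx
          have hset : (Finset.univ.filter fun x => ν x ≠ none ∧ ν x ≠ some cu) =
              insert k (Finset.univ.filter fun x => μ x ≠ none ∧ μ x ≠ some cu) := by
            ext x
            by_cases hx : x = k
            · subst hx
              simp only [Finset.mem_filter, Finset.mem_univ, true_and, Finset.mem_insert,
                true_or, iff_true, hνdef, Function.update_self]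
              exact ⟨by simp, by simpa using hcu⟩
            · simp [hx, hνdef, Function.update_of_ne hx, hμ0]
          have hbene : beneCount cu ν = beneCount cu μ + 1 := by
            unfold beneCount
            rw [hset, Finset.card_insert_of_notMem (by simp [hμk])]
          have := hmax ν hνm hνcomp
          omega
        · have heq := hone k c'' c hc'' hcu (hc k c'' hμk) hk
          rw [heq]
    have hfe : (Finset.univ.filter fun i => μ i = some c) =
        (Finset.univ.filter fun j => I.Eligible j c) := subset_antisymm hsub hEsub
    have hb : catCount μ c = (Finset.univ.filter fun j => I.Eligible j c).card := by
      unfold catCount; rw [hfe]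
    omega
  · have hb : catCount μ c = I.quota c := le_antisymm h1 hge
    omega

lemma catCount_cu_min (I : Inst N C) (cu : C) (hcuE : ∀ i : N, I.Eligible i cu)
    (μ : N → Option C) (hm : I.IsMatching μ) (hnw : NonWasteful I μ) :
    catCount μ cu =
      min (I.quota cu) (Finset.univ.filter fun i => ∀ c, c ≠ cu → μ i ≠ some c).card := by
  have hsub : (Finset.univ.filter fun i => μ i = some cu) ⊆
      (Finset.univ.filter fun i => ∀ c, c ≠ cu → μ i ≠ some c) := by
    intro k hk
    simp only [Finset.mem_filter, Finset.mem_univ, true_and] at hk ⊢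
    intro c hcne hcc
    rw [hk] at hcc
    exact hcne (Option.some_inj.1 hcc).symm
  have h2 := Finset.card_le_card hsub
  have h1 : catCount μ cu ≤ I.quota cu := hm cu
  rcases lt_or_ge (catCount μ cu) (I.quota cu) with hlt | hge
  · have hEsub : (Finset.univ.filter fun i => ∀ c, c ≠ cu → μ i ≠ some c) ⊆
        (Finset.univ.filter fun i => μ i = some cu) := by
      intro k hk
      simp only [Finset.mem_filter, Finset.mem_univ, true_and] at hk ⊢
      cases hμk : μ k with
      | none => exact absurd (hnw k cu (hcuE k) hμk) (Nat.ne_of_lt hlt)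
      | some c'' =>
        by_cases hcc : c'' = cu
        · rw [hcc]
        · exact absurd hμk (hk c'' hcc)
    have hfe := subset_antisymm hsub hEsub
    have hb : catCount μ cu =
        (Finset.univ.filter fun i => ∀ c, c ≠ cu → μ i ≠ some c).card := by
      unfold catCount; rw [hfe]
    omega
  · have hb : catCount μ cu = I.quota cu := le_antisymm h1 hge
    have hb2 : catCount μ cu =
        (Finset.univ.filter fun i => μ i = some cu).card := rfl
    omega

lemma fiber_upclosed_pref (I : Inst N C) (cu : C) (order : List N)
    (hcons : Consistent I order) (hone : OneCategory I cu)
    (μ : N → Option C) (hc : Complies I μ) (hrp : RespectsPriorities I μ)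
    (hop : OrderPreservingMG I cu μ) (c : C) (hcu : c ≠ cu) {i j : N}
    (hj : μ j = some c) (hi : I.Eligible i c)
    (hlt : order.idxOf i < order.idxOf j) : μ i = some c := by
  have hjE : I.Eligible j c := hc j c hj
  have hs : I.Strict c (some i) (some j) := (hcons c i j hi hjE).2 hlt
  cases hμi : μ i with
  | none => exact absurd ⟨j, i, c, hj, hμi, hs⟩ hrp
  | some ci =>
    by_cases hci : ci = cu
    · exact absurd hci (hop i j ci c hμi hj hcu hs hi)
    · rw [hone i ci c hci hcu (hc i ci hμi) hi]

lemma fiber_upclosed_cu (I : Inst N C) (cu : C) (order : List N)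
    (hcuE : ∀ i : N, I.Eligible i cu) (hcons : Consistent I order)
    (μ : N → Option C) (hrp : RespectsPriorities I μ) {i j : N}
    (hj : μ j = some cu) (hlt : order.idxOf i < order.idxOf j) : μ i ≠ none := by
  intro hμi
  exact hrp ⟨j, i, cu, hj, hμi, (hcons cu i j (hcuE i) (hcuE j)).2 hlt⟩

end Aux2
section Aux3

open Finset

lemma props_unique (I : Inst N C) (cu : C) (order : List N) (hb : IsBaseline order)
    (hcuE : ∀ i : N, I.Eligible i cu) (hcons : Consistent I order) (hone : OneCategory I cu)
    {μ ν : N → Option C}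
    (hm1 : I.IsMatching μ) (hc1 : Complies I μ) (hx1 : MaxBene I cu μ)
    (hr1 : RespectsPriorities I μ) (hw1 : NonWasteful I μ) (ho1 : OrderPreservingMG I cu μ)
    (hm2 : I.IsMatching ν) (hc2 : Complies I ν) (hx2 : MaxBene I cu ν)
    (hr2 : RespectsPriorities I ν) (hw2 : NonWasteful I ν) (ho2 : OrderPreservingMG I cu ν) :
    μ = ν := by
  have hf : ∀ a b : N, order.idxOf a = order.idxOf b → a = b :=
    fun a b h => (List.idxOf_inj (hb.2 a)).1 h
  -- preferential fibers coincide
  have hpref : ∀ c, c ≠ cu → (Finset.univ.filter fun i => μ i = some c) =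
      (Finset.univ.filter fun i => ν i = some c) := by
    intro c hcune
    apply eq_of_upclosed (Finset.univ.filter fun j => I.Eligible j c) _ _
      (fun a => order.idxOf a) hf
    · intro k hk
      simp only [Finset.mem_filter, Finset.mem_univ, true_and] at hk ⊢
      exact hc1 k c hk
    · intro k hk
      simp only [Finset.mem_filter, Finset.mem_univ, true_and] at hk ⊢
      exact hc2 k c hk
    · intro j hj i hi hlt
      simp only [Finset.mem_filter, Finset.mem_univ, true_and] at hj hi ⊢
      exact fiber_upclosed_pref I cu order hcons hone μ hc1 hr1 ho1 c hcune hj hi hlt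
    · intro j hj i hi hlt
      simp only [Finset.mem_filter, Finset.mem_univ, true_and] at hj hi ⊢
      exact fiber_upclosed_pref I cu order hcons hone ν hc2 hr2 ho2 c hcune hj hi hlt
    · show catCount μ c = catCount ν c
      rw [catCount_pref_min I cu hone μ hm1 hc1 hx1 hw1 c hcune,
        catCount_pref_min I cu hone ν hm2 hc2 hx2 hw2 c hcune]
  have hmemb : ∀ (i : N) (c : C), c ≠ cu → (μ i = some c ↔ ν i = some c) := by
    intro i c hcune
    constructor
    · intro h
      have : i ∈ Finset.univ.filter fun x => ν x = some c := by
        rw [← hpref c hcune]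
        simp [h]
      simpa using this
    · intro h
      have : i ∈ Finset.univ.filter fun x => μ x = some c := by
        rw [hpref c hcune]
        simp [h]
      simpa using this
  -- the set of agents not matched to a preferential category is the same
  have hRset : (Finset.univ.filter fun i => ∀ c, c ≠ cu → μ i ≠ some c) =
      (Finset.univ.filter fun i => ∀ c, c ≠ cu → ν i ≠ some c) := by
    ext i
    simp only [Finset.mem_filter, Finset.mem_univ, true_and]
    constructor
    · intro h c hcune hcc
      exact h c hcune ((hmemb i c hcune).2 hcc)
    · intro h c hcune hcc
      exact h c hcune ((hmemb i c hcune).1 hcc)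
  -- cu fibers coincide
  have hcufib : (Finset.univ.filter fun i => μ i = some cu) =
      (Finset.univ.filter fun i => ν i = some cu) := by
    apply eq_of_upclosed (Finset.univ.filter fun i => ∀ c, c ≠ cu → μ i ≠ some c) _ _
      (fun a => order.idxOf a) hf
    · intro k hk
      simp only [Finset.mem_filter, Finset.mem_univ, true_and] at hk ⊢
      intro c hcune hcc
      rw [hk] at hcc
      exact hcune (Option.some_inj.1 hcc).symm
    · intro k hk
      simp only [Finset.mem_filter, Finset.mem_univ, true_and] at hk ⊢
      intro c hcune hcc
      have hnu := (hmemb k c hcune).1 hcc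
      rw [hk] at hnu
      exact hcune (Option.some_inj.1 hnu).symm
    · intro j hj i hi hlt
      simp only [Finset.mem_filter, Finset.mem_univ, true_and] at hj hi ⊢
      have hne := fiber_upclosed_cu I cu order hcuE hcons μ hr1 hj hlt
      cases hμi : μ i with
      | none => exact absurd hμi hne
      | some c'' =>
        by_cases hcc : c'' = cu
        · rw [hcc]
        · exact absurd hμi (hi c'' hcc)
    · intro j hj i hi hlt
      rw [hRset] at hi
      simp only [Finset.mem_filter, Finset.mem_univ, true_and] at hj hi ⊢
      have hne := fiber_upclosed_cu I cu order hcuE hcons ν hr2 hj hlt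
      cases hνi : ν i with
      | none => exact absurd hνi hne
      | some c'' =>
        by_cases hcc : c'' = cu
        · rw [hcc]
        · exact absurd hνi (hi c'' hcc)
    · show catCount μ cu = catCount ν cu
      rw [catCount_cu_min I cu hcuE μ hm1 hw1, catCount_cu_min I cu hcuE ν hm2 hw2, hRset]
  have hmembcu : ∀ i : N, μ i = some cu ↔ ν i = some cu := by
    intro i
    constructor
    · intro h
      have : i ∈ Finset.univ.filter fun x => ν x = some cu := by
        rw [← hcufib]; simp [h]
      simpa using this
    · intro h
      have : i ∈ Finset.univ.filter fun x => μ x = some cu := by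
        rw [hcufib]; simp [h]
      simpa using this
  funext i
  cases hμi : μ i with
  | some c =>
    by_cases hcc : c = cu
    · subst hcc
      exact ((hmembcu i).1 hμi).symm
    · exact ((hmemb i c hcc).1 hμi).symm
  | none =>
    cases hνi : ν i with
    | none => rfl
    | some c =>
      by_cases hcc : c = cu
      · subst hcc
        exact absurd ((hmembcu i).2 hνi) (by simp [hμi])
      · exact absurd ((hmemb i c hcc).2 hνi) (by simp [hμi])

end Aux3
section Aux4

open Finset

structure MGI (I : Inst N C) (cu : C) (order l : List N) (μ : N → Option C) : Prop where
  i1 : ∀ j, μ j ≠ none → j ∈ l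
  i2 : ∀ c, catCount μ c ≤ I.quota c
  i3 : ∀ j c, μ j = some c → I.Eligible j c
  i5 : ∀ j ∈ l, ∀ c, c ≠ cu → I.Eligible j c → μ j = some c ∨ catCount μ c = I.quota c
  i6 : ∀ j ∈ l, μ j = none → catCount μ cu = I.quota cu
  i7a : ∀ c, c ≠ cu → ∀ j k : N, μ j = some c → I.Eligible k c →
    order.idxOf k < order.idxOf j → μ k = some c
  i7b : ∀ k j : N, μ k = some cu → j ∈ l → order.idxOf j < order.idxOf k → μ j ≠ none

lemma mgi_step (I : Inst N C) (cu : C) (order l r : List N) (i : N)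
    (hord : order = l ++ i :: r) (hnd : order.Nodup)
    (hcuE : ∀ i : N, I.Eligible i cu) (hone : OneCategory I cu)
    (μ : N → Option C) (h : MGI I cu order l μ) :
    MGI I cu order (l ++ [i]) (mgStep I cu μ i) := by
  have hil : i ∉ l := by
    rw [hord] at hnd
    exact fun hmem => (List.nodup_append.1 hnd).2.2 i hmem i List.mem_cons_self rfl
  have hμi : μ i = none := by
    by_contra hcon
    exact hil (h.i1 i hcon)
  have hidxi : order.idxOf i = l.length := by
    rw [hord, List.idxOf_append_of_notMem hil, List.idxOf_cons_self]
    omega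
  have hmem_lt : ∀ k : N, order.idxOf k < l.length → k ∈ l := by
    intro k hk
    by_contra hkl
    rw [hord, List.idxOf_append_of_notMem hkl] at hk
    omega
  have hmem_idx : ∀ k ∈ l, order.idxOf k < l.length := by
    intro k hk
    rw [hord, List.idxOf_append_of_mem hk]
    exact List.idxOf_lt_length_iff.2 hk
  by_cases hP : ∃ c, c ≠ cu ∧ I.Eligible i c ∧ catCount μ c < I.quota c
  · have hstep : mgStep I cu μ i = Function.update μ i (some hP.choose) := dif_pos hP
    rw [hstep]
    obtain ⟨hc0cu, hc0el, hc0lt⟩ := hP.choose_spec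
    set c0 := hP.choose with hc0def
    have hcnt := catCount_update μ i hμi c0
    constructor
    · intro j hj
      by_cases hji : j = i
      · exact List.mem_append.2 (Or.inr (by simp [hji]))
      · rw [Function.update_of_ne hji] at hj
        exact List.mem_append_left _ (h.i1 j hj)
    · intro c'
      rw [hcnt c']
      by_cases hcc : c' = c0
      · rw [if_pos hcc, hcc]
        omega
      · rw [if_neg hcc]
        have := h.i2 c'
        omega
    · intro j c hj
      by_cases hji : j = i
      · subst hji
        rw [Function.update_self] at hj
        rw [← Option.some_inj.1 hj]
        exact hc0el
      · rw [Function.update_of_ne hji] at hj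
        exact h.i3 j c hj
    · intro j hj c hccu hel
      by_cases hji : j = i
      · subst hji
        left
        rw [Function.update_self, hone j c c0 hccu hc0cu hel hc0el]
      · have hjl : j ∈ l := by
          rcases List.mem_append.1 hj with h' | h'
          · exact h'
          · exact absurd (List.mem_singleton.1 h') hji
        rcases h.i5 j hjl c hccu hel with hs | hs
        · left
          rw [Function.update_of_ne hji]
          exact hs
        · right
          rw [hcnt c]
          by_cases hcc : c = c0
          · rw [hcc] at hs; omega
          · rw [if_neg hcc]; omega
    · intro j hj hnone
      by_cases hji : j = i
      · subst hji
        rw [Function.update_self] at hnone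
        exact absurd hnone (by simp)
      · have hjl : j ∈ l := by
          rcases List.mem_append.1 hj with h' | h'
          · exact h'
          · exact absurd (List.mem_singleton.1 h') hji
        rw [Function.update_of_ne hji] at hnone
        have hs := h.i6 j hjl hnone
        rw [hcnt cu]
        by_cases hcc : cu = c0
        · exact absurd hcc.symm hc0cu
        · rw [if_neg hcc]; omega
    · intro c hccu j k hj hk hidx
      by_cases hji : j = i
      · rw [hji] at hj hidx
        rw [Function.update_self] at hj
        have hcc0 : c0 = c := Option.some_inj.1 hj
        have hkl : k ∈ l := hmem_lt k (by rw [← hidxi]; exact hidx)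
        rcases h.i5 k hkl c hccu hk with hs | hs
        · have hki : k ≠ i := fun e => hil (e ▸ hkl)
          rw [Function.update_of_ne hki]
          exact hs
        · rw [← hcc0] at hs; omega
      · rw [Function.update_of_ne hji] at hj
        have hs := h.i7a c hccu j k hj hk hidx
        have hki : k ≠ i := fun e => hil (e ▸ h.i1 k (by rw [hs]; simp))
        rw [Function.update_of_ne hki]
        exact hs
    · intro k j hk hjl hidx
      by_cases hki : k = i
      · subst hki
        rw [Function.update_self] at hk
        exact absurd (Option.some_inj.1 hk) hc0cu
      · rw [Function.update_of_ne hki] at hk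
        rcases List.mem_append.1 hjl with hjl' | hjl'
        · have hne := h.i7b k j hk hjl' hidx
          have hji : j ≠ i := fun e => hil (e ▸ hjl')
          rw [Function.update_of_ne hji]
          exact hne
        · exfalso
          have hje : j = i := List.mem_singleton.1 hjl'
          have hkl : k ∈ l := h.i1 k (by rw [hk]; simp)
          have := hmem_idx k hkl
          rw [hje, hidxi] at hidx
          omega
  · have hstep : mgStep I cu μ i =
        if catCount μ cu < I.quota cu then Function.update μ i (some cu) else μ := dif_neg hP
    rw [hstep]
    have hfull : ∀ c, c ≠ cu → I.Eligible i c → catCount μ c = I.quota c := by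
      intro c hccu hel
      have hnlt : ¬ catCount μ c < I.quota c := fun hlt => hP ⟨c, hccu, hel, hlt⟩
      have := h.i2 c
      omega
    by_cases hq : catCount μ cu < I.quota cu
    · rw [if_pos hq]
      have hcnt := catCount_update μ i hμi cu
      constructor
      · intro j hj
        by_cases hji : j = i
        · exact List.mem_append.2 (Or.inr (by simp [hji]))
        · rw [Function.update_of_ne hji] at hj
          exact List.mem_append_left _ (h.i1 j hj)
      · intro c'
        rw [hcnt c']
        by_cases hcc : c' = cu
        · rw [if_pos hcc, hcc]
          omega
        · rw [if_neg hcc]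
          have := h.i2 c'
          omega
      · intro j c hj
        by_cases hji : j = i
        · subst hji
          rw [Function.update_self] at hj
          rw [← Option.some_inj.1 hj]
          exact hcuE j
        · rw [Function.update_of_ne hji] at hj
          exact h.i3 j c hj
      · intro j hj c hccu hel
        by_cases hji : j = i
        · subst hji
          right
          rw [hcnt c, if_neg hccu]
          have := hfull c hccu hel
          omega
        · have hjl : j ∈ l := by
            rcases List.mem_append.1 hj with h' | h'
            · exact h'
            · exact absurd (List.mem_singleton.1 h') hji
          rcases h.i5 j hjl c hccu hel with hs | hs
          · left
            rw [Function.update_of_ne hji]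
            exact hs
          · right
            rw [hcnt c, if_neg hccu]
            omega
      · intro j hj hnone
        by_cases hji : j = i
        · subst hji
          rw [Function.update_self] at hnone
          exact absurd hnone (by simp)
        · have hjl : j ∈ l := by
            rcases List.mem_append.1 hj with h' | h'
            · exact h'
            · exact absurd (List.mem_singleton.1 h') hji
          rw [Function.update_of_ne hji] at hnone
          have hs := h.i6 j hjl hnone
          omega
      · intro c hccu j k hj hk hidx
        by_cases hji : j = i
        · subst hji
          rw [Function.update_self] at hj
          exact absurd (Option.some_inj.1 hj) (fun e => hccu e.symm)
        · rw [Function.update_of_ne hji] at hj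
          have hs := h.i7a c hccu j k hj hk hidx
          have hki : k ≠ i := fun e => hil (e ▸ h.i1 k (by rw [hs]; simp))
          rw [Function.update_of_ne hki]
          exact hs
      · intro k j hk hjl hidx
        by_cases hki : k = i
        · rcases List.mem_append.1 hjl with hjl' | hjl'
          · have hji : j ≠ i := fun e => hil (e ▸ hjl')
            rw [Function.update_of_ne hji]
            intro hnone
            have := h.i6 j hjl' hnone
            omega
          · have hje : j = i := List.mem_singleton.1 hjl'
            rw [hje, hki] at hidx
            exact absurd hidx (lt_irrefl _)
        · rw [Function.update_of_ne hki] at hk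
          rcases List.mem_append.1 hjl with hjl' | hjl'
          · have hne := h.i7b k j hk hjl' hidx
            have hji : j ≠ i := fun e => hil (e ▸ hjl')
            rw [Function.update_of_ne hji]
            exact hne
          · exfalso
            have hje : j = i := List.mem_singleton.1 hjl'
            have hkl : k ∈ l := h.i1 k (by rw [hk]; simp)
            have := hmem_idx k hkl
            rw [hje, hidxi] at hidx
            omega
    · rw [if_neg hq]
      have hcufull : catCount μ cu = I.quota cu := le_antisymm (h.i2 cu) (not_lt.1 hq)
      constructor
      · exact fun j hj => List.mem_append_left _ (h.i1 j hj)
      · exact h.i2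
      · exact h.i3
      · intro j hj c hccu hel
        by_cases hji : j = i
        · subst hji
          exact Or.inr (hfull c hccu hel)
        · have hjl : j ∈ l := by
            rcases List.mem_append.1 hj with h' | h'
            · exact h'
            · exact absurd (List.mem_singleton.1 h') hji
          exact h.i5 j hjl c hccu hel
      · intro j hj hnone
        exact hcufull
      · exact h.i7a
      · intro k j hk hjl hidx
        have hkl : k ∈ l := h.i1 k (by rw [hk]; simp)
        have hklt := hmem_idx k hkl
        rcases List.mem_append.1 hjl with hjl' | hjl'
        · exact h.i7b k j hk hjl' hidx
        · exfalso
          have hje : j = i := List.mem_singleton.1 hjl'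
          rw [hje, hidxi] at hidx
          omega

lemma mg_MGI (I : Inst N C) (cu : C) (order : List N) (hnd : order.Nodup)
    (hcuE : ∀ i : N, I.Eligible i cu) (hone : OneCategory I cu) :
    MGI I cu order order (mgOutcome I cu order) := by
  have main : ∀ (r l : List N) (μ : N → Option C), order = l ++ r → MGI I cu order l μ →
      MGI I cu order order (r.foldl (mgStep I cu) μ) := by
    intro r
    induction r with
    | nil =>
      intro l μ hord hI
      rw [List.foldl_nil]
      rw [List.append_nil] at hord
      subst hord
      exact hI
    | cons a r ih =>
      intro l μ hord hI
      rw [List.foldl_cons]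
      exact ih (l ++ [a]) _ (by rw [hord]; simp)
        (mgi_step I cu order l r a hord hnd hcuE hone μ hI)
  have base : MGI I cu order [] (fun _ => none) := by
    constructor
    · exact fun j hj => absurd rfl hj
    · intro c
      have : catCount (fun _ : N => (none : Option C)) c = 0 := by
        unfold catCount
        simp
      omega
    · exact fun j c hj => absurd hj (by simp)
    · exact fun j hj => absurd hj List.not_mem_nil
    · exact fun j hj => absurd hj List.not_mem_nil
    · exact fun c hc j k hj => absurd hj (by simp)
    · exact fun k j hk hj => absurd hj List.not_mem_nil
  exact main order [] (fun _ => none) rfl base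

end Aux4
section Aux5

open Finset

lemma mg_catCount_min (I : Inst N C) (cu : C) (order : List N) (hb : IsBaseline order)
    (hcuE : ∀ i : N, I.Eligible i cu) (hone : OneCategory I cu) (c : C) (hccu : c ≠ cu) :
    catCount (mgOutcome I cu order) c =
      min (I.quota c) (Finset.univ.filter fun j => I.Eligible j c).card := by
  have M := mg_MGI I cu order hb.1 hcuE hone
  set μ := mgOutcome I cu order with hμdef
  have hsub : (Finset.univ.filter fun i => μ i = some c) ⊆
      (Finset.univ.filter fun j => I.Eligible j c) := by
    intro k hk
    simp only [Finset.mem_filter, Finset.mem_univ, true_and] at hk ⊢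
    exact M.i3 k c hk
  have hbr : catCount μ c = (Finset.univ.filter fun i => μ i = some c).card := rfl
  have h2 := Finset.card_le_card hsub
  have h1 : catCount μ c ≤ I.quota c := M.i2 c
  rcases lt_or_ge (catCount μ c) (I.quota c) with hlt | hge
  · have hEsub : (Finset.univ.filter fun j => I.Eligible j c) ⊆
        (Finset.univ.filter fun i => μ i = some c) := by
      intro k hk
      simp only [Finset.mem_filter, Finset.mem_univ, true_and] at hk ⊢
      rcases M.i5 k (hb.2 k) c hccu hk with hs | hs
      · exact hs
      · omega
    have hfe := subset_antisymm hsub hEsub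
    have hb2 : catCount μ c = (Finset.univ.filter fun j => I.Eligible j c).card := by
      rw [hbr, hfe]
    omega
  · have hb2 : catCount μ c = I.quota c := le_antisymm h1 hge
    omega

lemma mg_props (I : Inst N C) (cu : C) (order : List N) (hb : IsBaseline order)
    (hcuE : ∀ i : N, I.Eligible i cu) (hcons : Consistent I order) (hone : OneCategory I cu) :
    I.IsMatching (mgOutcome I cu order) ∧ Complies I (mgOutcome I cu order) ∧
    MaxBene I cu (mgOutcome I cu order) ∧ RespectsPriorities I (mgOutcome I cu order) ∧
    NonWasteful I (mgOutcome I cu order) ∧ OrderPreservingMG I cu (mgOutcome I cu order) := by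
  have M := mg_MGI I cu order hb.1 hcuE hone
  have himg : ∀ (ξ : N → Option C), ∀ c ∈ ((Finset.univ.filter fun i =>
      ξ i ≠ none ∧ ξ i ≠ some cu).image fun i => (ξ i).getD cu), c ≠ cu := by
    intro ξ c hc
    obtain ⟨x, hx, rfl⟩ := Finset.mem_image.1 hc
    simp only [Finset.mem_filter, Finset.mem_univ, true_and] at hx
    cases hξ : ξ x with
    | none => exact absurd hξ hx.1
    | some c' =>
      simp only [Option.getD_some]
      intro e
      subst e
      exact hx.2 hξ
  refine ⟨M.i2, fun i c h => M.i3 i c h, ?_, ?_, ?_, ?_⟩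
  · -- MaxBene
    intro ν hνm hνc
    set μ := mgOutcome I cu order with hμdef
    set t := ((Finset.univ.filter fun i => ν i ≠ none ∧ ν i ≠ some cu).image
        fun i => (ν i).getD cu) ∪ ((Finset.univ.filter fun i =>
        μ i ≠ none ∧ μ i ≠ some cu).image fun i => (μ i).getD cu) with htdef
    have ht1 : ∀ c ∈ t, c ≠ cu := by
      intro c hc
      rcases Finset.mem_union.1 hc with h' | h'
      · exact himg ν c h'
      · exact himg μ c h'
    have h2ν : ∀ i : N, ν i ≠ none → ν i ≠ some cu → (ν i).getD cu ∈ t := by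
      intro i hn hncu
      exact Finset.mem_union_left _ (Finset.mem_image_of_mem _ (by simp [hn, hncu]))
    have h2μ : ∀ i : N, μ i ≠ none → μ i ≠ some cu → (μ i).getD cu ∈ t := by
      intro i hn hncu
      exact Finset.mem_union_right _ (Finset.mem_image_of_mem _ (by simp [hn, hncu]))
    rw [beneCount_eq_sum cu ν t ht1 h2ν, beneCount_eq_sum cu μ t ht1 h2μ]
    apply Finset.sum_le_sum
    intro c hc
    have hccu := ht1 c hc
    have hmin := mg_catCount_min I cu order hb hcuE hone c hccu
    rw [← hμdef] at hmin
    have hb1 : catCount ν c ≤ I.quota c := hνm c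
    have hsubν : (Finset.univ.filter fun i => ν i = some c) ⊆
        (Finset.univ.filter fun j => I.Eligible j c) := by
      intro k hk
      simp only [Finset.mem_filter, Finset.mem_univ, true_and] at hk ⊢
      exact hνc k c hk
    have hb2 : catCount ν c ≤ (Finset.univ.filter fun j => I.Eligible j c).card :=
      Finset.card_le_card hsubν
    omega
  · -- RespectsPriorities
    rintro ⟨i, j, c, hi, hj, hs⟩
    have hiE := M.i3 i c hi
    by_cases hcc : c = cu
    · rw [hcc] at hi hs
      have hidx := (hcons cu j i (hcuE j) (hcuE i)).1 hs
      exact M.i7b i j hi (hb.2 j) hidx hj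
    · have hjE := elig_of_strict I c hs hiE
      have hidx := (hcons c j i hjE hiE).1 hs
      have hkk := M.i7a c hcc i j hi hjE hidx
      rw [hj] at hkk
      exact absurd hkk (by simp)
  · -- NonWasteful
    intro i c hel hnone
    by_cases hcc : c = cu
    · rw [hcc]
      exact M.i6 i (hb.2 i) hnone
    · rcases M.i5 i (hb.2 i) c hcc hel with hs | hs
      · rw [hnone] at hs
        exact absurd hs (by simp)
      · exact hs
  · -- OrderPreservingMG
    intro i j ci cj hi hj hcj hs hel
    have hjE := M.i3 j cj hj
    have hidx := (hcons cj i j hel hjE).1 hs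
    have hkk := M.i7a cj hcj j i hj hel hidx
    rw [hi] at hkk
    intro hciu
    have e := Option.some_inj.1 hkk
    rw [e] at hciu
    exact hcj hciu

end Aux5
/-- If each agent is eligible for at most one preferential category and all
categories' priorities are consistent with the baseline ordering, then the outcome of the
minimum-guarantees rule is the UNIQUE matching that complies with the eligibility
requirements, is a maximum beneficiary assignment, respects priorities, is non-wasteful,
and is order preserving for `q_{c_u^1} = 0` and `q_{c_u^2} = q_{c_u}`. -/
theorem minimum_guarantees_unique (I : Inst N C) (cu : C) (order : List N)
    (hb : IsBaseline order) (hcuE : ∀ i : N, I.Eligible i cu)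
    (hcons : Consistent I order) (hone : OneCategory I cu) :
    (I.IsMatching (mgOutcome I cu order) ∧
        Complies I (mgOutcome I cu order) ∧
        MaxBene I cu (mgOutcome I cu order) ∧
        RespectsPriorities I (mgOutcome I cu order) ∧
        NonWasteful I (mgOutcome I cu order) ∧
        OrderPreservingMG I cu (mgOutcome I cu order)) ∧
      ∀ μ : N → Option C, I.IsMatching μ → Complies I μ → MaxBene I cu μ →
        RespectsPriorities I μ → NonWasteful I μ → OrderPreservingMG I cu μ →
        μ = mgOutcome I cu order := by
  obtain ⟨g1, g2, g3, g4, g5, g6⟩ := mg_props I cu order hb hcuE hcons hone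
  refine ⟨⟨g1, g2, g3, g4, g5, g6⟩, ?_⟩
  intro μ h1 h2 h3 h4 h5 h6
  exact props_unique I cu order hb hcuE hcons hone h1 h2 h3 h4 h5 h6 g1 g2 g3 g4 g5 g6
end

section
/- Non-uniqueness of over-and-above: there exists an instance in which each agent is eligible for at most one preferential category and all categories' priorities are consistent with the baseline ordering, and two DISTINCT matchings that both comply with the eligibility requirements, are maximum beneficiary assignments, respect priorities, are non-wasteful, and are order preserving for q_{c_u^1} = q_{c_u} and q_{c_u^2} = 0. -/
open scoped Classical

variable {N C : Type*} [Fintype N] [DecidableEq N] [DecidableEq C]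

/-! ### Auxiliary construction for the non-uniqueness example -/

/-- Rank function defining the priorities of the example instance:
category `0` is the unreserved category (all agents eligible, ranked by index);
category `1` is preferential with eligible agents `0 ≻ 2` and agent `1` ineligible. -/
def rk : Fin 2 → Option (Fin 3) → ℕ
  | ⟨0, _⟩, some i => i.val
  | ⟨0, _⟩, none => 3
  | ⟨1, _⟩, some ⟨0, _⟩ => 0
  | ⟨1, _⟩, some ⟨2, _⟩ => 1
  | ⟨1, _⟩, some ⟨1, _⟩ => 2
  | ⟨1, _⟩, none => 2

/-- The example instance. -/
def I0 : Inst (Fin 3) (Fin 2) where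
  quota := fun _ => 1
  prio c x y := rk c x ≤ rk c y
  total c x y := le_total _ _
  trans c x y z := le_trans

lemma I0_strict_iff (c : Fin 2) (x y : Option (Fin 3)) :
    I0.Strict c x y ↔ rk c x < rk c y := by
  show rk c x ≤ rk c y ∧ ¬ rk c y ≤ rk c x ↔ _
  omega

lemma I0_elig_iff (i : Fin 3) (c : Fin 2) :
    I0.Eligible i c ↔ rk c (some i) < rk c none := I0_strict_iff c (some i) none

/-- The first matching: `0 ↦ c₁`, `1 ↦ cᵤ`, `2` unmatched. -/
def μ0 : Fin 3 → Option (Fin 2) := ![some 1, some 0, none]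

/-- The second matching: `0 ↦ cᵤ`, `1` unmatched, `2 ↦ c₁`. -/
def ν0 : Fin 3 → Option (Fin 2) := ![some 0, none, some 1]

lemma card_filter_one {p : Fin 3 → Prop} [DecidablePred p] (a : Fin 3)
    (h : ∀ i, p i ↔ i = a) : (Finset.univ.filter p).card = 1 := by
  rw [show Finset.univ.filter p = {a} by ext i; simp [h i]]
  rfl

lemma bene_le_one (ρ : Fin 3 → Option (Fin 2)) (hρ : I0.IsMatching ρ) :
    beneCount 0 ρ ≤ 1 := by
  have key : (Finset.univ.filter fun i => ρ i ≠ none ∧ ρ i ≠ some 0) =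
      Finset.univ.filter fun i => ρ i = some 1 := by
    ext i
    simp only [Finset.mem_filter, Finset.mem_univ, true_and]
    rcases h : ρ i with _ | c
    · simp
    · fin_cases c <;> simp
  have := hρ 1
  unfold beneCount
  rw [key]
  simpa [I0] using this

/-- Non-uniqueness of over-and-above: there exist an instance in which each
agent is eligible for at most one preferential category and all categories' priorities are
consistent with the baseline ordering, and two DISTINCT matchings that both comply with the
eligibility requirements, are maximum beneficiary assignments, respect priorities, are
non-wasteful, and are order preserving for `q_{c_u^1} = q_{c_u}` and `q_{c_u^2} = 0`. -/
theorem over_and_above_not_unique :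
    ∃ (n m : ℕ) (I : Inst (Fin n) (Fin m)) (cu : Fin m) (order : List (Fin n)),
      IsBaseline order ∧ (∀ i : Fin n, I.Eligible i cu) ∧
        Consistent I order ∧ OneCategory I cu ∧
        ∃ μ ν : Fin n → Option (Fin m), μ ≠ ν ∧
          (I.IsMatching μ ∧ Complies I μ ∧ MaxBene I cu μ ∧ RespectsPriorities I μ ∧
            NonWasteful I μ ∧ OrderPreservingOA I cu μ) ∧
          (I.IsMatching ν ∧ Complies I ν ∧ MaxBene I cu ν ∧ RespectsPriorities I ν ∧
            NonWasteful I ν ∧ OrderPreservingOA I cu ν) := by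
  have catμ : ∀ c : Fin 2, catCount μ0 c = 1 := by
    intro c
    fin_cases c
    · exact card_filter_one 1 (by decide)
    · exact card_filter_one 0 (by decide)
  have catν : ∀ c : Fin 2, catCount ν0 c = 1 := by
    intro c
    fin_cases c
    · exact card_filter_one 0 (by decide)
    · exact card_filter_one 2 (by decide)
  have matchμ : I0.IsMatching μ0 := fun c => le_of_eq (catμ c)
  have matchν : I0.IsMatching ν0 := fun c => le_of_eq (catν c)
  have beneμ : beneCount 0 μ0 = 1 := card_filter_one 0 (by decide)
  have beneν : beneCount 0 ν0 = 1 := card_filter_one 2 (by decide)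
  refine ⟨3, 2, I0, 0, [0, 1, 2], ⟨by decide, by decide⟩, ?_, ?_, ?_,
    μ0, ν0, ?_, ⟨matchμ, ?_, ?_, ?_, ?_, ?_⟩, ⟨matchν, ?_, ?_, ?_, ?_, ?_⟩⟩
  · intro i
    rw [I0_elig_iff]
    fin_cases i <;> decide
  · intro c i j hi hj
    rw [I0_elig_iff] at hi hj
    rw [I0_strict_iff]
    fin_cases c <;> fin_cases i <;> fin_cases j <;> revert hi hj <;> decide
  · intro i c c' hc hc' _ _
    fin_cases c <;> fin_cases c' <;> simp_all
  · intro h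
    exact absurd (congrFun h 0) (by decide)
  -- properties of μ0
  · intro i c hi
    rw [I0_elig_iff]
    fin_cases i <;> fin_cases c <;> revert hi <;> decide
  · intro ρ hm _
    rw [beneμ]
    exact bene_le_one ρ hm
  · rintro ⟨i, j, c, hi, hj, hs⟩
    rw [I0_strict_iff] at hs
    fin_cases i <;> fin_cases j <;> fin_cases c <;> revert hi hj hs <;> decide
  · intro i c _ _
    rw [catμ c]
    rfl
  · intro i j ci cj hi hj hci hs he
    rw [I0_strict_iff] at hs
    rw [I0_elig_iff] at he
    fin_cases i <;> fin_cases j <;> fin_cases ci <;> fin_cases cj <;>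
      revert hi hj hci hs he <;> decide
  -- properties of ν0
  · intro i c hi
    rw [I0_elig_iff]
    fin_cases i <;> fin_cases c <;> revert hi <;> decide
  · intro ρ hm _
    rw [beneν]
    exact bene_le_one ρ hm
  · rintro ⟨i, j, c, hi, hj, hs⟩
    rw [I0_strict_iff] at hs
    fin_cases i <;> fin_cases j <;> fin_cases c <;> revert hi hj hs <;> decide
  · intro i c _ _
    rw [catν c]
    rfl
  · intro i j ci cj hi hj hci hs he
    rw [I0_strict_iff] at hs
    rw [I0_elig_iff] at he
    fin_cases i <;> fin_cases j <;> fin_cases ci <;> fin_cases cj <;>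
      revert hi hj hci hs he <;> decide
end

section
/- For every instance of the rationing problem with an unreserved category split into c_u^1 and c_u^2 and every baseline ordering ≻_π, every matching output by the Smart Reverse Rejecting (SRR) rule complies with the eligibility requirements and is a maximum beneficiary assignment: it maximizes the number of agents matched to preferential categories among all matchings complying with the eligibility requirements. -/
open scoped Classical

variable {N C : Type*} [Fintype N] [DecidableEq N] [DecidableEq C]

/-- The number of agents matched to a preferential category, i.e. a category other than the
unreserved subcategories `cu1` and `cu2`. -/
def beneCount2 (cu1 cu2 : C) (μ : N → Option C) : ℕ :=
  (Finset.univ.filter fun i => μ i ≠ none ∧ μ i ≠ some cu1 ∧ μ i ≠ some cu2).card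

/-- `μ` is a matching of the reservation graph of the instance restricted to the
preferential categories that leaves all agents of `S` unmatched. -/
def PMatch (I : Inst N C) (cu1 cu2 : C) (S : Finset N) (μ : N → Option C) : Prop :=
  I.IsMatching μ ∧ (∀ i ∈ S, μ i = none) ∧
    ∀ (i : N) (c : C), μ i = some c → c ≠ cu1 ∧ c ≠ cu2 ∧ I.Eligible i c

/-- The maximum number of agents of `N \ S` that can simultaneously be matched to
preferential categories. -/
noncomputable def msAvoid (I : Inst N C) (cu1 cu2 : C) (S : Finset N) : ℕ :=
  sSup {k | ∃ μ : N → Option C, PMatch I cu1 cu2 S μ ∧ msize μ = k}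

/-- The set `N_1` of agents receiving an unreserved unit of `c_u^1` under the SRR rule:
considering the agents in order of the baseline ordering from highest to lowest priority,
agent `i` is added to `N_1` if `|N_1| < q_{c_u^1}` and the agents in `N \ (N_1 ∪ {i})` can
still be matched to the preferential categories so as to form a maximum beneficiary
assignment. -/
noncomputable def srrN1 (I : Inst N C) (cu1 cu2 : C) (order : List N) : Finset N :=
  order.foldl
    (fun N1 i =>
      if N1.card < I.quota cu1 ∧
          msAvoid I cu1 cu2 (insert i N1) = msAvoid I cu1 cu2 (∅ : Finset N) then
        insert i N1
      else N1) ∅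

/-- `μ` is a matching of the reduced reservation graph (restricted to the preferential
categories) in which the agents of `N1` are removed and, additionally, all edges `{j,c}`
such that some rejected agent `i ∈ R` has `i ≻_c j` are removed. -/
def PMatchR (I : Inst N C) (cu1 cu2 : C) (N1 R : Finset N) (μ : N → Option C) : Prop :=
  PMatch I cu1 cu2 (N1 ∪ R) μ ∧
    ∀ (i : N) (c : C), μ i = some c → ∀ j ∈ R, ¬ I.Strict c (some j) (some i)

/-- The size of a maximum size matching of the reduced reservation graph (restricted to the
preferential categories, without the agents of `N1`, with rejected set `R`). -/
noncomputable def msR (I : Inst N C) (cu1 cu2 : C) (N1 R : Finset N) : ℕ :=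
  sSup {k | ∃ μ : N → Option C, PMatchR I cu1 cu2 N1 R μ ∧ msize μ = k}

/-- The rejected set of the RR rule run on the agents outside `N1` with the preferential
categories, processing the agents from lowest to highest baseline priority. -/
noncomputable def srrRej (I : Inst N C) (cu1 cu2 : C) (order : List N) (N1 : Finset N) :
    Finset N :=
  (order.filter fun i => decide (i ∉ N1)).foldr
    (fun i R =>
      if msR I cu1 cu2 N1 (insert i R) = msR I cu1 cu2 N1 (∅ : Finset N) then insert i R
      else R) ∅

/-- The final matching of the SRR rule, given the set `N1` of agents matched to `c_u^1` and
the matching `μP` of the remaining agents to the preferential categories: the agents left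
unmatched receive the `q_{c_u^2}` units of `c_u^2` in order of the baseline ordering from
highest to lowest priority. -/
noncomputable def srrFinal (I : Inst N C) (cu1 cu2 : C) (order : List N) (N1 : Finset N)
    (μP : N → Option C) : N → Option C := fun i =>
  if i ∈ N1 then some cu1
  else
    match μP i with
    | some c => some c
    | none =>
      if (Finset.univ.filter fun j =>
            j ∉ N1 ∧ μP j = none ∧ order.idxOf j < order.idxOf i).card <
          I.quota cu2 then
        some cu2
      else none

/-- `μ` is a possible output of the Smart Reverse Rejecting (SRR) rule. -/
def IsSRROutcome (I : Inst N C) (cu1 cu2 : C) (order : List N) (μ : N → Option C) : Prop :=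
  ∃ μP : N → Option C,
    PMatchR I cu1 cu2 (srrN1 I cu1 cu2 order) (srrRej I cu1 cu2 order (srrN1 I cu1 cu2 order))
      μP ∧
    msize μP =
      msR I cu1 cu2 (srrN1 I cu1 cu2 order) (srrRej I cu1 cu2 order (srrN1 I cu1 cu2 order)) ∧
    μ = srrFinal I cu1 cu2 order (srrN1 I cu1 cu2 order) μP

section Aux

lemma aux_msize_le_card (μ : N → Option C) : msize μ ≤ Fintype.card N := by
  classical
  exact (Finset.card_filter_le _ _).trans (le_of_eq Finset.card_univ)

lemma aux_pm_bdd (I : Inst N C) (cu1 cu2 : C) (S : Finset N) :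
    BddAbove {k | ∃ μ : N → Option C, PMatch I cu1 cu2 S μ ∧ msize μ = k} := by
  refine ⟨Fintype.card N, ?_⟩
  rintro k ⟨μ, -, rfl⟩
  exact aux_msize_le_card μ

lemma aux_srrN1_spec (I : Inst N C) (cu1 cu2 : C) (order : List N) :
    (srrN1 I cu1 cu2 order).card ≤ I.quota cu1 ∧
      msAvoid I cu1 cu2 (srrN1 I cu1 cu2 order) = msAvoid I cu1 cu2 (∅ : Finset N) := by
  classical
  have key : ∀ (l : List N) (N1 : Finset N),
      N1.card ≤ I.quota cu1 → msAvoid I cu1 cu2 N1 = msAvoid I cu1 cu2 (∅ : Finset N) →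
      (l.foldl
        (fun N1 i =>
          if N1.card < I.quota cu1 ∧
              msAvoid I cu1 cu2 (insert i N1) = msAvoid I cu1 cu2 (∅ : Finset N) then
            insert i N1
          else N1) N1).card ≤ I.quota cu1 ∧
      msAvoid I cu1 cu2
        (l.foldl
          (fun N1 i =>
            if N1.card < I.quota cu1 ∧
                msAvoid I cu1 cu2 (insert i N1) = msAvoid I cu1 cu2 (∅ : Finset N) then
              insert i N1
            else N1) N1) = msAvoid I cu1 cu2 (∅ : Finset N) := by
    intro l
    induction l with
    | nil => intro N1 h1 h2; exact ⟨h1, h2⟩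
    | cons i l ih =>
      intro N1 h1 h2
      simp only [List.foldl_cons]
      by_cases h : N1.card < I.quota cu1 ∧
          msAvoid I cu1 cu2 (insert i N1) = msAvoid I cu1 cu2 (∅ : Finset N)
      · rw [if_pos h]
        exact ih _ ((Finset.card_insert_le _ _).trans h.1) h.2
      · rw [if_neg h]
        exact ih _ h1 h2
  simpa [srrN1] using key order ∅ (by simp) rfl

lemma aux_srrRej_spec (I : Inst N C) (cu1 cu2 : C) (order : List N) (N1 : Finset N) :
    msR I cu1 cu2 N1 (srrRej I cu1 cu2 order N1) = msR I cu1 cu2 N1 (∅ : Finset N) := by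
  classical
  have key : ∀ l : List N,
      msR I cu1 cu2 N1
        (l.foldr
          (fun i R =>
            if msR I cu1 cu2 N1 (insert i R) = msR I cu1 cu2 N1 (∅ : Finset N) then insert i R
            else R) ∅) = msR I cu1 cu2 N1 (∅ : Finset N) := by
    intro l
    induction l with
    | nil => rfl
    | cons i l ih =>
      simp only [List.foldr_cons]
      by_cases h : msR I cu1 cu2 N1
          (insert i (l.foldr
            (fun i R =>
              if msR I cu1 cu2 N1 (insert i R) = msR I cu1 cu2 N1 (∅ : Finset N) then insert i R
              else R) ∅)) = msR I cu1 cu2 N1 (∅ : Finset N)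
      · rw [if_pos h]; exact h
      · rw [if_neg h]; exact ih
  exact key _

lemma aux_msR_empty (I : Inst N C) (cu1 cu2 : C) (N1 : Finset N) :
    msR I cu1 cu2 N1 (∅ : Finset N) = msAvoid I cu1 cu2 N1 := by
  unfold msR msAvoid
  congr 1
  ext k
  constructor
  · rintro ⟨μ, ⟨h1, -⟩, h3⟩
    exact ⟨μ, by simpa using h1, h3⟩
  · rintro ⟨μ, h1, h3⟩
    exact ⟨μ, ⟨by simpa using h1, by simp⟩, h3⟩

lemma aux_rank_card_le (order : List N) (hb : IsBaseline order) (P : N → Prop) (q : ℕ) :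
    (Finset.univ.filter fun i => P i ∧
        (Finset.univ.filter fun j => P j ∧ order.idxOf j < order.idxOf i).card < q).card
      ≤ q := by
  classical
  have mono : ∀ a b : N, P a → order.idxOf a < order.idxOf b →
      (Finset.univ.filter fun j => P j ∧ order.idxOf j < order.idxOf a).card <
      (Finset.univ.filter fun j => P j ∧ order.idxOf j < order.idxOf b).card := by
    intro a b ha hab
    have hsub : insert a (Finset.univ.filter fun j => P j ∧ order.idxOf j < order.idxOf a)
        ⊆ Finset.univ.filter fun j => P j ∧ order.idxOf j < order.idxOf b := by
      intro x hx
      rcases Finset.mem_insert.mp hx with rfl | hx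
      · exact Finset.mem_filter.mpr ⟨Finset.mem_univ _, ha, hab⟩
      · have hx' := Finset.mem_filter.mp hx
        exact Finset.mem_filter.mpr ⟨Finset.mem_univ _, hx'.2.1, hx'.2.2.trans hab⟩
    have hnm : a ∉ (Finset.univ.filter fun j => P j ∧ order.idxOf j < order.idxOf a) := by
      simp
    calc (Finset.univ.filter fun j => P j ∧ order.idxOf j < order.idxOf a).card
        < (Finset.univ.filter fun j => P j ∧ order.idxOf j < order.idxOf a).card + 1 :=
          Nat.lt_succ_self _
      _ = (insert a (Finset.univ.filter fun j => P j ∧ order.idxOf j < order.idxOf a)).card :=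
          (Finset.card_insert_of_notMem hnm).symm
      _ ≤ _ := Finset.card_le_card hsub
  rw [← Finset.card_range q]
  apply Finset.card_le_card_of_injOn
      (fun i => (Finset.univ.filter fun j => P j ∧ order.idxOf j < order.idxOf i).card)
  · intro i hi
    have hi' := Finset.mem_filter.mp hi
    simpa using hi'.2.2
  · intro i hi j hj hij
    simp only [Finset.coe_filter, Set.mem_setOf_eq, Finset.mem_univ, true_and] at hi hj
    by_contra hne'
    have hmem : order.idxOf i ≠ order.idxOf j := by
      intro h
      exact hne' ((List.idxOf_inj (hb.2 i)).mp h)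
    rcases lt_or_gt_of_ne hmem with h | h
    · exact absurd hij (Nat.ne_of_lt (mono i j hi.1 h))
    · exact absurd hij.symm (Nat.ne_of_lt (mono j i hj.1 h))

end Aux

/-- Every matching output by the SRR rule complies with the eligibility
requirements and is a maximum beneficiary assignment: it maximizes the number of agents
matched to preferential categories among all matchings complying with the eligibility
requirements. -/
theorem srr_complies_and_max_beneficiary (I : Inst N C) (cu1 cu2 : C) (order : List N)
    (μ : N → Option C) (hne : cu1 ≠ cu2) (hb : IsBaseline order)
    (h1E : ∀ i : N, I.Eligible i cu1) (h2E : ∀ i : N, I.Eligible i cu2)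
    (h1P : ∀ i j : N, I.Strict cu1 (some i) (some j) ↔ order.idxOf i < order.idxOf j)
    (h2P : ∀ i j : N, I.Strict cu2 (some i) (some j) ↔ order.idxOf i < order.idxOf j)
    (hout : IsSRROutcome I cu1 cu2 order μ) :
    I.IsMatching μ ∧ Complies I μ ∧
      ∀ ν : N → Option C, I.IsMatching ν → Complies I ν →
        beneCount2 cu1 cu2 ν ≤ beneCount2 cu1 cu2 μ := by
  classical
  obtain ⟨μP, hPR, hsz, hμ⟩ := hout
  set N1 := srrN1 I cu1 cu2 order with hN1def
  set R := srrRej I cu1 cu2 order N1 with hRdef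
  obtain ⟨⟨hmatch, hzero, hpref⟩, -⟩ := hPR
  subst hμ
  -- per-agent values of the final matching
  have hz1 : ∀ i ∈ N1, μP i = none := fun i hi => hzero i (Finset.mem_union_left _ hi)
  have fval1 : ∀ i ∈ N1, srrFinal I cu1 cu2 order N1 μP i = some cu1 := by
    intro i hi; simp [srrFinal, hi]
  have finv : ∀ i c, srrFinal I cu1 cu2 order N1 μP i = some c →
      (i ∈ N1 ∧ c = cu1) ∨ (i ∉ N1 ∧ μP i = some c) ∨
        (i ∉ N1 ∧ μP i = none ∧ c = cu2 ∧
          (Finset.univ.filter fun j =>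
            j ∉ N1 ∧ μP j = none ∧ order.idxOf j < order.idxOf i).card < I.quota cu2) := by
    intro i c hc
    by_cases hi : i ∈ N1
    · left
      refine ⟨hi, ?_⟩
      rw [fval1 i hi] at hc
      exact (Option.some_injective _ hc).symm
    · cases hP : μP i with
      | some c' =>
        right; left
        refine ⟨hi, ?_⟩
        simp only [srrFinal, if_neg hi, hP] at hc
        exact hc
      | none =>
        right; right
        simp only [srrFinal, if_neg hi, hP] at hc
        split_ifs at hc with hcard
        exact ⟨hi, rfl, (Option.some_injective _ hc).symm, hcard⟩
  -- the final matching is a matching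
  have hM : I.IsMatching (srrFinal I cu1 cu2 order N1 μP) := by
    intro c
    by_cases hc1 : c = cu1
    · rw [hc1]
      have hset : (Finset.univ.filter fun i => srrFinal I cu1 cu2 order N1 μP i = some cu1)
          = N1 := by
        ext i
        simp only [Finset.mem_filter, Finset.mem_univ, true_and]
        constructor
        · intro h
          rcases finv i cu1 h with ⟨hi, -⟩ | ⟨hi, hP⟩ | ⟨hi, -, hcu, -⟩
          · exact hi
          · exact absurd rfl (hpref i cu1 hP).1
          · exact absurd hcu hne
        · intro hi; exact fval1 i hi
      rw [hset]
      exact (aux_srrN1_spec I cu1 cu2 order).1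
    · by_cases hc2 : c = cu2
      · rw [hc2]
        have hsub : (Finset.univ.filter fun i => srrFinal I cu1 cu2 order N1 μP i = some cu2)
            ⊆ Finset.univ.filter fun i => (i ∉ N1 ∧ μP i = none) ∧
              (Finset.univ.filter fun j => (j ∉ N1 ∧ μP j = none) ∧
                order.idxOf j < order.idxOf i).card < I.quota cu2 := by
          intro i hi
          have h := (Finset.mem_filter.mp hi).2
          rcases finv i cu2 h with ⟨-, hcu⟩ | ⟨-, hP⟩ | ⟨hi', hP, -, hcard⟩
          · exact absurd hcu hne.symm
          · exact absurd rfl (hpref i cu2 hP).2.1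
          · refine Finset.mem_filter.mpr ⟨Finset.mem_univ _, ⟨hi', hP⟩, ?_⟩
            convert hcard using 2
            ext j
            simp [and_assoc]
        refine (Finset.card_le_card hsub).trans ?_
        convert aux_rank_card_le order hb (fun j => j ∉ N1 ∧ μP j = none) (I.quota cu2)
          using 2
        congr!
        ext i
        simp
        intro _ _
        exact Iff.of_eq (congrArg (· < I.quota cu2) (congrArg Finset.card (by ext j; simp)))
      · have hset : (Finset.univ.filter fun i => srrFinal I cu1 cu2 order N1 μP i = some c)
            = Finset.univ.filter fun i => μP i = some c := by
          ext i
          simp only [Finset.mem_filter, Finset.mem_univ, true_and]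
          constructor
          · intro h
            rcases finv i c h with ⟨-, hcu⟩ | ⟨-, hP⟩ | ⟨-, -, hcu, -⟩
            · exact absurd hcu hc1
            · exact hP
            · exact absurd hcu hc2
          · intro h
            have hi : i ∉ N1 := fun hi => by rw [hz1 i hi] at h; exact Option.some_ne_none _ h.symm
            simp [srrFinal, hi, h]
        rw [hset]
        exact hmatch c
  refine ⟨hM, ?_, ?_⟩
  -- compliance
  · intro i c hc
    rcases finv i c hc with ⟨-, rfl⟩ | ⟨-, hP⟩ | ⟨-, -, rfl, -⟩
    · exact h1E i
    · exact (hpref i c hP).2.2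
    · exact h2E i
  -- maximum beneficiary assignment
  · intro ν hνM hνC
    -- beneficiary count of the output equals msize μP
    have hbc : beneCount2 cu1 cu2 (srrFinal I cu1 cu2 order N1 μP) = msize μP := by
      unfold beneCount2 msize
      congr 1
      ext i
      simp only [Finset.mem_filter, Finset.mem_univ, true_and]
      constructor
      · rintro ⟨h0, h1, h2⟩
        cases hP : μP i with
        | some c => simp
        | none =>
          exfalso
          by_cases hi : i ∈ N1
          · exact h1 (fval1 i hi)
          · rcases fval3 : srrFinal I cu1 cu2 order N1 μP i with - | c
            · exact h0 fval3
            · rcases finv i c fval3 with ⟨hi', -⟩ | ⟨-, hP'⟩ | ⟨-, -, rfl, -⟩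
              · exact hi hi'
              · rw [hP] at hP'; exact Option.some_ne_none _ hP'.symm
              · exact h2 fval3
      · intro h0
        cases hP : μP i with
        | none => rw [hP] at h0; exact absurd rfl h0
        | some c =>
          have hi : i ∉ N1 := fun hi => by rw [hz1 i hi] at hP; exact Option.some_ne_none _ hP.symm
          have hval : srrFinal I cu1 cu2 order N1 μP i = some c := by
            simp [srrFinal, hi, hP]
          refine ⟨by simp [hval], ?_, ?_⟩
          · rw [hval]
            simp only [Ne, Option.some_inj]
            exact (hpref i c hP).1
          · rw [hval]
            simp only [Ne, Option.some_inj]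
            exact (hpref i c hP).2.1
    rw [hbc, hsz, hRdef, aux_srrRej_spec, aux_msR_empty, hN1def,
      (aux_srrN1_spec I cu1 cu2 order).2]
    -- the projection of ν to preferential categories witnesses the bound
    set ν' : N → Option C := fun i =>
      match ν i with
      | some c => if c = cu1 ∨ c = cu2 then none else some c
      | none => none with hν'def
    have hν'some : ∀ i c, ν' i = some c → ν i = some c ∧ c ≠ cu1 ∧ c ≠ cu2 := by
      intro i c h
      cases hv : ν i with
      | none => simp [hν'def, hv] at h
      | some c' =>
        simp only [hν'def, hv] at h
        split_ifs at h with hor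
        push_neg at hor
        rw [Option.some_inj] at h
        exact ⟨congrArg some h, h ▸ hor.1, h ▸ hor.2⟩
    have hPM : PMatch I cu1 cu2 (∅ : Finset N) ν' := by
      refine ⟨?_, by simp, ?_⟩
      · intro c
        refine (Finset.card_le_card ?_).trans (hνM c)
        intro i hi
        have h := (Finset.mem_filter.mp hi).2
        exact Finset.mem_filter.mpr ⟨Finset.mem_univ _, (hν'some i c h).1⟩
      · intro i c h
        obtain ⟨hv, h1, h2⟩ := hν'some i c h
        exact ⟨h1, h2, hνC i c hv⟩
    have hms : beneCount2 cu1 cu2 ν = msize ν' := by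
      unfold beneCount2 msize
      congr 1
      ext i
      simp only [Finset.mem_filter, Finset.mem_univ, true_and]
      cases hv : ν i with
      | none => simp [hν'def, hv]
      | some c =>
        by_cases hor : c = cu1 ∨ c = cu2
        · rcases hor with rfl | rfl <;> simp [hν'def, hv]
        · push_neg at hor
          simp [hν'def, hv, hor.1, hor.2]
    rw [hms]
    exact le_csSup (aux_pm_bdd I cu1 cu2 ∅) ⟨ν', hPM, rfl⟩
end
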